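/- For all real numbers u, v with 3 ≤ u ≤ v, one has (v·log v)/I₁(2v) ≤ (u·log u)/I₁(2u); that is, the function u ↦ (u·log u)/I₁(2u) is nonincreasing on [3,∞). -/

import Mathlib

/-- The modified Bessel function of the first kind `I₁`. -/
noncomputable def besselI1 (x : ℝ) : ℝ :=
  ∑' m : ℕ, (1 / (m.factorial * (m + 1).factorial) : ℝ) * (x / 2) ^ (2 * m + 1)

/-- Auxiliary series: `gSum u = I₁(2u)/u`. -/
noncomputable def gSum (u : ℝ) : ℝ :=
  ∑' m : ℕ, (1 / (m.factorial * (m + 1).factorial) : ℝ) * u ^ (2 * m)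

lemma summable_gSum (u : ℝ) :
    Summable (fun m : ℕ => (1 / (m.factorial * (m + 1).factorial) : ℝ) * u ^ (2 * m)) := by
  apply Summable.of_nonneg_of_le (f := fun m : ℕ => (u ^ 2) ^ m / m.factorial)
  · intro m
    have h1 : (0 : ℝ) < m.factorial * (m + 1).factorial := by positivity
    have h2 : (0 : ℝ) ≤ u ^ (2 * m) := by
      rw [pow_mul]; positivity
    positivity
  · intro m
    have hpow : u ^ (2 * m) = (u ^ 2) ^ m := by rw [pow_mul]
    have h2 : (0 : ℝ) ≤ (u ^ 2) ^ m := by positivity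
    rw [hpow]
    have hfac : (m.factorial : ℝ) ≤ m.factorial * (m + 1).factorial := by
      have h1 : (1:ℝ) ≤ ((m+1).factorial : ℝ) := by
        exact_mod_cast Nat.one_le_iff_ne_zero.2 (Nat.factorial_ne_zero (m+1))
      have h2 : (0:ℝ) < (m.factorial : ℝ) := by exact_mod_cast Nat.factorial_pos m
      nlinarith
    have hfle : (1 / (m.factorial * (m + 1).factorial) : ℝ) ≤ 1 / m.factorial :=
      one_div_le_one_div_of_le (by positivity) hfac
    calc (1 / (m.factorial * (m + 1).factorial) : ℝ) * (u ^ 2) ^ m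
        ≤ (1 / m.factorial) * (u ^ 2) ^ m := mul_le_mul_of_nonneg_right hfle h2
      _ = (u ^ 2) ^ m / m.factorial := by ring
  · exact Real.summable_pow_div_factorial (u ^ 2)

lemma besselI1_two_mul (u : ℝ) : besselI1 (2 * u) = u * gSum u := by
  rw [besselI1, gSum, ← tsum_mul_left]
  congr 1
  funext m
  have : 2 * u / 2 = u := by ring
  rw [this, pow_succ]
  ring

lemma gSum_ge_one {u : ℝ} (hu : 0 ≤ u) : 1 ≤ gSum u := by
  have h0 : (1 / ((0:ℕ).factorial * ((0:ℕ) + 1).factorial) : ℝ) * u ^ (2 * 0) = 1 := by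
    norm_num
  calc (1:ℝ) = (1 / ((0:ℕ).factorial * ((0:ℕ) + 1).factorial) : ℝ) * u ^ (2 * 0) := h0.symm
    _ ≤ gSum u := by
        apply Summable.le_tsum (summable_gSum u) 0
        intro m _
        have : (0:ℝ) ≤ u ^ (2 * m) := by rw [pow_mul]; positivity
        positivity

/-- Key inequality: for `3 ≤ u ≤ v`, `v * gSum u ≤ u * gSum v`. -/
lemma key_ineq {u v : ℝ} (hu : 3 ≤ u) (huv : u ≤ v) : v * gSum u ≤ u * gSum v := by
  have hu0 : (0:ℝ) < u := by linarith
  have hv0 : (0:ℝ) < v := by linarith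
  set F : ℕ → ℝ := fun m =>
    u * ((1 / (m.factorial * (m + 1).factorial) : ℝ) * v ^ (2 * m)) -
    v * ((1 / (m.factorial * (m + 1).factorial) : ℝ) * u ^ (2 * m)) with hF
  have hSum : Summable F :=
    ((summable_gSum v).mul_left u).sub ((summable_gSum u).mul_left v)
  have htsum : ∑' m, F m = u * gSum v - v * gSum u := by
    rw [hF, Summable.tsum_sub ((summable_gSum v).mul_left u) ((summable_gSum u).mul_left v),
      tsum_mul_left, tsum_mul_left, gSum, gSum]
  have hsplit := hSum.sum_add_tsum_nat_add 2
  have hfirst : ∑ i ∈ Finset.range 2, F i = (u - v) + (u * v ^ 2 - v * u ^ 2) / 2 := by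
    rw [Finset.sum_range_succ, Finset.sum_range_one, hF]
    norm_num [Nat.factorial]
    ring
  have hfirst_nonneg : 0 ≤ ∑ i ∈ Finset.range 2, F i := by
    rw [hfirst]
    have h2 : (0:ℝ) ≤ u * v - 2 := by nlinarith
    nlinarith [mul_nonneg (sub_nonneg.2 huv) h2]
  have htail : 0 ≤ ∑' m : ℕ, F (m + 2) := by
    apply tsum_nonneg
    intro m
    rw [hF]
    simp only
    have hc : (0:ℝ) < 1 / ((m+2).factorial * ((m+2) + 1).factorial) := by positivity
    have hk : 2 * (m + 2) = (2 * m + 3) + 1 := by ring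
    have hple : u ^ (2 * m + 3) ≤ v ^ (2 * m + 3) :=
      pow_le_pow_left₀ (le_of_lt hu0) huv _
    have hup : (0:ℝ) ≤ u ^ (2 * m + 3) := by positivity
    set c := (1 / (((m+2).factorial : ℝ) * ((m+2) + 1).factorial)) with hc'
    have hv4 : v ^ (2 * (m + 2)) = v ^ (2*m+3) * v := by rw [hk, pow_succ]
    have hu4 : u ^ (2 * (m + 2)) = u ^ (2*m+3) * u := by rw [hk, pow_succ]
    rw [hv4, hu4]
    have heq : u * (c * (v ^ (2*m+3) * v)) - v * (c * (u ^ (2*m+3) * u))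
        = c * (u * v) * (v ^ (2*m+3) - u ^ (2*m+3)) := by ring
    rw [heq]
    have hcuv : 0 ≤ c * (u * v) := by positivity
    nlinarith
  have : 0 ≤ u * gSum v - v * gSum u := by
    rw [← htsum, ← hsplit]
    exact add_nonneg hfirst_nonneg htail
  linarith

theorem ulogu_div_besselI1_antitone (u v : ℝ) (hu : 3 ≤ u) (huv : u ≤ v) :
    v * Real.log v / besselI1 (2 * v) ≤ u * Real.log u / besselI1 (2 * u) := by
  have hu0 : (0:ℝ) < u := by linarith
  have hv0 : (0:ℝ) < v := by linarith
  have hgu : (1:ℝ) ≤ gSum u := gSum_ge_one hu0.le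
  have hgv : (1:ℝ) ≤ gSum v := gSum_ge_one hv0.le
  rw [besselI1_two_mul, besselI1_two_mul,
    mul_div_mul_left _ _ (ne_of_gt hv0), mul_div_mul_left _ _ (ne_of_gt hu0)]
  -- now: log v / gSum v ≤ log u / gSum u
  have he3 : Real.exp 1 ≤ 3 := by
    have := Real.exp_one_lt_d9
    linarith
  have hlog_div : Real.log v / v ≤ Real.log u / u :=
    Real.log_div_self_antitoneOn (by simpa using le_trans he3 hu)
      (by show Real.exp 1 ≤ v; linarith) huv
  have hlogu : 0 < Real.log u := Real.log_pos (by linarith)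
  have h1 : Real.log v ≤ (v / u) * Real.log u := by
    rw [div_le_div_iff₀ hv0 hu0] at hlog_div
    rw [div_mul_eq_mul_div, le_div_iff₀ hu0]
    nlinarith [hlog_div]
  have h2 : (v / u) * gSum u ≤ gSum v := by
    rw [div_mul_eq_mul_div, div_le_iff₀ hu0, mul_comm (gSum v) u]
    exact key_ineq hu huv
  have hvu : 0 < v / u := div_pos hv0 hu0
  calc Real.log v / gSum v
      ≤ ((v / u) * Real.log u) / ((v / u) * gSum u) := by
        apply div_le_div₀ (by positivity) h1 (by positivity) h2
    _ = Real.log u / gSum u := mul_div_mul_left _ _ (ne_of_gt hvu)
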